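/- Let $(Z(t))_{t \in \mathbb{R}}$ be a Gaussian process with mean $u$, unit variance, and covariance $\operatorname{Cov}(Z(t), Z(s)) = \frac{\sin(t-s)}{t-s}$ for $t \ne s$. Then $\lim_{\delta \downarrow 0} \frac{1}{\delta} \mathbb{P}(Z(0) Z(\delta) < 0) = \frac{1}{\pi\sqrt{3}} e^{-u^2/2}$. -/

import Mathlib

open MeasureTheory Real Filter

namespace GaussSignAux

open Set

noncomputable section

/-- The region `{(w, σ) : σ² < w²}` obtained from `{xy < 0}` by the linear change of
variables. -/
def S : Set (ℝ × ℝ) := {p : ℝ × ℝ | p.2 ^ 2 < p.1 ^ 2}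

lemma measurableSet_S : MeasurableSet S :=
  measurableSet_lt (by fun_prop) (by fun_prop)

lemma sinc_lt_one {δ : ℝ} (h : δ ∈ Set.Ioo (0:ℝ) 1) : Real.sin δ / δ < 1 := by
  rw [div_lt_one h.1]; exact Real.sin_lt h.1

lemma sinc_pos {δ : ℝ} (h : δ ∈ Set.Ioo (0:ℝ) 1) : 0 < Real.sin δ / δ :=
  div_pos (Real.sin_pos_of_pos_of_lt_pi h.1
    (lt_trans h.2 (by linarith [Real.pi_gt_three]))) h.1

lemma tendsto_sinc : Tendsto (fun x : ℝ => Real.sin x / x) (nhdsWithin 0 (Set.Ioi 0)) (nhds 1) := by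
  have h := Real.hasDerivAt_sin 0
  rw [Real.cos_zero] at h
  have h2 := hasDerivAt_iff_tendsto_slope.mp h
  have h3 : Tendsto (slope Real.sin 0) (nhdsWithin 0 (Set.Ioi 0)) (nhds 1) :=
    h2.mono_left (nhdsWithin_mono 0 (fun x hx => ne_of_gt hx))
  refine h3.congr (fun x => ?_)
  simp [slope_def_field]

lemma tendsto_half :
    Tendsto (fun x : ℝ => x / 2) (nhdsWithin 0 (Set.Ioi 0)) (nhdsWithin 0 (Set.Ioi 0)) := by
  rw [tendsto_nhdsWithin_iff]
  constructor
  · have : Tendsto (fun x : ℝ => x / 2) (nhds 0) (nhds (0 / 2)) :=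
      tendsto_id.div_const 2
    rw [zero_div] at this
    exact this.mono_left nhdsWithin_le_nhds
  · exact eventually_nhdsWithin_of_forall (fun x hx => by
      simp only [Set.mem_Ioi] at hx ⊢; linarith)

lemma tendsto_one_sub_cos :
    Tendsto (fun x : ℝ => (1 - Real.cos x) / (3 * x ^ 2)) (nhdsWithin 0 (Set.Ioi 0))
      (nhds (1/6)) := by
  have base : Tendsto (fun x : ℝ => Real.sin (x/2) / (x/2)) (nhdsWithin 0 (Set.Ioi 0)) (nhds 1) :=
    tendsto_sinc.comp tendsto_half
  have sq : Tendsto (fun x : ℝ => (1/6 : ℝ) * (Real.sin (x/2) / (x/2)) ^ 2)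
      (nhdsWithin 0 (Set.Ioi 0)) (nhds (1/6)) := by
    have := (base.pow 2).const_mul (1/6 : ℝ)
    simpa using this
  refine sq.congr' ?_
  filter_upwards [self_mem_nhdsWithin] with x hx
  have hx0 : x ≠ 0 := ne_of_gt hx
  have hs : Real.sin (x/2) ^ 2 = 1/2 - Real.cos x / 2 := by
    have := Real.sin_sq_eq_half_sub (x/2)
    rwa [show 2 * (x/2) = x by ring] at this
  rw [div_pow, hs]
  field_simp
  ring

lemma tendsto_cube :
    Tendsto (fun x : ℝ => (x - Real.sin x) / x ^ 3) (nhdsWithin 0 (Set.Ioi 0)) (nhds (1/6)) := by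
  refine HasDerivAt.lhopital_zero_right_on_Ioo (f' := fun x => 1 - Real.cos x)
    (g' := fun x => 3 * x ^ 2) one_pos ?_ ?_ ?_ ?_ ?_ tendsto_one_sub_cos
  · intro x _
    exact (hasDerivAt_id' x).sub (Real.hasDerivAt_sin x)
  · intro x _
    have := hasDerivAt_pow 3 x
    norm_num at this
    convert this using 1
  · intro x hx
    have : (0:ℝ) < x := hx.1
    positivity
  · have : Tendsto (fun x : ℝ => x - Real.sin x) (nhds 0) (nhds (0 - Real.sin 0)) :=
      (continuous_id.sub Real.continuous_sin).tendsto 0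
    simp only [Real.sin_zero, sub_zero] at this
    exact this.mono_left nhdsWithin_le_nhds
  · have : Tendsto (fun x : ℝ => x ^ 3) (nhds 0) (nhds (0 ^ 3)) :=
      (continuous_pow 3).tendsto 0
    norm_num at this
    exact this.mono_left nhdsWithin_le_nhds

lemma tendsto_k_div :
    Tendsto (fun δ : ℝ => Real.sqrt (1 - Real.sin δ / δ) / δ) (nhdsWithin 0 (Set.Ioi 0))
      (nhds (Real.sqrt 6)⁻¹) := by
  have h1 : Tendsto (fun δ : ℝ => Real.sqrt ((δ - Real.sin δ) / δ ^ 3))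
      (nhdsWithin 0 (Set.Ioi 0)) (nhds (Real.sqrt (1/6))) :=
    (Real.continuous_sqrt.tendsto _).comp tendsto_cube
  have h2 : Real.sqrt (1/6 : ℝ) = (Real.sqrt 6)⁻¹ := by
    rw [one_div, Real.sqrt_inv]
  rw [← h2]
  refine h1.congr' ?_
  filter_upwards [Ioo_mem_nhdsGT_of_mem (by norm_num : (0:ℝ) ∈ Set.Ico (0:ℝ) 1)] with δ hδ
  have hδ0 : (0:ℝ) < δ := hδ.1
  have hr1 : Real.sin δ / δ < 1 := sinc_lt_one hδ
  have : (δ - Real.sin δ) / δ ^ 3 = (1 - Real.sin δ / δ) / δ ^ 2 := by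
    rw [div_eq_div_iff (by positivity) (by positivity)]
    field_simp
  rw [this, Real.sqrt_div (by linarith), Real.sqrt_sq hδ0.le]

lemma tendsto_m :
    Tendsto (fun δ : ℝ => Real.sqrt (1 + Real.sin δ / δ)) (nhdsWithin 0 (Set.Ioi 0))
      (nhds (Real.sqrt 2)) := by
  have h1 : Tendsto (fun δ : ℝ => 1 + Real.sin δ / δ) (nhdsWithin 0 (Set.Ioi 0)) (nhds 2) := by
    have := tendsto_const_nhds (α := ℝ) (x := (1:ℝ))
      (f := nhdsWithin (0:ℝ) (Set.Ioi 0)) |>.add tendsto_sinc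
    norm_num at this
    exact this
  exact (Real.continuous_sqrt.tendsto _).comp h1

lemma integral_x_exp : ∫ x in Set.Ioi (0:ℝ), x * Real.exp (-x^2) = 1/2 := by
  have A : ∀ x ∈ Set.Ici (0:ℝ), HasDerivAt (fun t : ℝ => -(Real.exp (-t^2)/2))
      (x * Real.exp (-x^2)) x := by
    intro x _
    have h1 : HasDerivAt (fun t : ℝ => -t^2) (-(2*x)) x := by
      exact (hasDerivAt_pow 2 x).neg.congr_deriv (by norm_num)
    have h2 := (h1.exp).div_const 2
    have h3 := h2.neg
    exact h3.congr_deriv (by ring)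
  have B : Tendsto (fun t : ℝ => -(Real.exp (-t^2)/2)) atTop (nhds 0) := by
    have h1 : Tendsto (fun t : ℝ => Real.exp (-(t^2))) atTop (nhds 0) :=
      Real.tendsto_exp_neg_atTop_nhds_zero.comp (tendsto_pow_atTop two_ne_zero)
    have := (h1.div_const 2).neg
    simpa using this
  have hint : IntegrableOn (fun x : ℝ => x * Real.exp (-x^2)) (Set.Ioi 0) := by
    have := integrable_mul_exp_neg_mul_sq (b := 1) one_pos
    simpa using this.integrableOn
  have := integral_Ioi_of_hasDerivAt_of_tendsto' (f := fun t : ℝ => -(Real.exp (-t^2)/2))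
    (fun x hx => A x hx) hint B
  rw [this]
  norm_num

lemma integrable_bound :
    Integrable (fun p : ℝ × ℝ => Real.exp (-(1/2) * p.1^2) * Real.exp (-(1/2) * p.2^2)) := by
  have h1 : Integrable (fun x : ℝ => Real.exp (-(1/2) * x^2)) :=
    integrable_exp_neg_mul_sq (by norm_num)
  rw [show (volume : Measure (ℝ × ℝ)) = Measure.prod volume volume
    from Measure.volume_eq_prod ℝ ℝ]
  exact h1.mul_prod h1

lemma integrable_indicator_J :
    Integrable (S.indicator (fun p : ℝ × ℝ => Real.exp (-p.1^2))) := by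
  refine integrable_bound.mono ?_ (ae_of_all _ fun p => ?_)
  · exact ((Real.continuous_exp.comp (continuous_fst.pow 2).neg).aestronglyMeasurable).indicator
      measurableSet_S
  · rw [Real.norm_eq_abs, Real.norm_eq_abs,
      abs_of_pos (a := Real.exp (-(1/2) * p.1^2) * Real.exp (-(1/2) * p.2^2)) (by positivity)]
    by_cases hp : p ∈ S
    · rw [Set.indicator_of_mem hp, abs_of_pos (Real.exp_pos _), ← Real.exp_add]
      apply Real.exp_le_exp.mpr
      have : p.2 ^ 2 < p.1 ^ 2 := hp
      nlinarith
    · rw [Set.indicator_of_notMem hp, abs_zero]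
      positivity

lemma integral_J : ∫ p in S, Real.exp (-p.1^2) = 2 := by
  have h1 : ∫ p in S, Real.exp (-p.1^2) =
      ∫ p : ℝ × ℝ, S.indicator (fun p : ℝ × ℝ => Real.exp (-p.1^2)) p :=
    (integral_indicator measurableSet_S).symm
  rw [h1]
  have h2 := integrable_indicator_J
  rw [show (volume : Measure (ℝ × ℝ)) = Measure.prod volume volume
    from Measure.volume_eq_prod ℝ ℝ] at h2 ⊢
  rw [integral_prod _ h2]
  have h3 : ∀ x : ℝ, (∫ y : ℝ, S.indicator (fun p : ℝ × ℝ => Real.exp (-p.1^2)) (x, y))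
      = 2 * |x| * Real.exp (-x^2) := by
    intro x
    have hset : {y : ℝ | ((x, y) : ℝ × ℝ) ∈ S} = Set.Ioo (-|x|) |x| := by
      ext y
      simp only [S, Set.mem_setOf_eq, Set.mem_Ioo, ← abs_lt]
      exact sq_lt_sq
    have e1 : (fun y : ℝ => S.indicator (fun p : ℝ × ℝ => Real.exp (-p.1^2)) (x, y))
        = (Set.Ioo (-|x|) |x|).indicator (fun _ : ℝ => Real.exp (-x^2)) := by
      funext y
      have hiff : (((x, y) : ℝ × ℝ) ∈ S) ↔ y ∈ Set.Ioo (-|x|) |x| := Set.ext_iff.mp hset y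
      classical
      simp only [Set.indicator_apply]
      rw [if_congr hiff rfl rfl]
    rw [e1, integral_indicator_const _ measurableSet_Ioo, measureReal_def, Real.volume_Ioo,
      show |x| - -|x| = 2 * |x| by ring, ENNReal.toReal_ofReal (by positivity), smul_eq_mul]
  simp_rw [h3]
  have e2 : (fun x : ℝ => 2 * |x| * Real.exp (-x^2))
      = fun x : ℝ => (fun t : ℝ => 2 * t * Real.exp (-t^2)) |x| := by
    funext x
    simp only [← sq_abs x]
  rw [e2, integral_comp_abs (f := fun t : ℝ => 2 * t * Real.exp (-t^2))]
  have : ∫ t in Set.Ioi (0:ℝ), 2 * t * Real.exp (-t^2)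
      = 2 * ∫ t in Set.Ioi (0:ℝ), t * Real.exp (-t^2) := by
    rw [← integral_const_mul]
    congr 1
    funext t
    ring
  rw [this, integral_x_exp]
  norm_num

lemma cov (u : ℝ) {δ : ℝ} (hr0 : 0 < Real.sin δ / δ) (hr1 : Real.sin δ / δ < 1) :
    (∫ p : ℝ × ℝ in {q : ℝ × ℝ | q.1 * q.2 < 0},
        (2 * π * Real.sqrt (1 - (Real.sin δ / δ) ^ 2))⁻¹ *
          Real.exp (-(((p.1 - u) ^ 2 + (p.2 - u) ^ 2
            - 2 * (Real.sin δ / δ) * (p.1 - u) * (p.2 - u))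
            / (2 * (1 - (Real.sin δ / δ) ^ 2))))) =
      (Real.sqrt (1 - Real.sin δ / δ) / (π * Real.sqrt (1 + Real.sin δ / δ))) *
        ∫ p : ℝ × ℝ in S,
          Real.exp (-((Real.sqrt (1 - Real.sin δ / δ) * p.2 - u) ^ 2 / (1 + Real.sin δ / δ)
            + p.1 ^ 2)) := by
  set r : ℝ := Real.sin δ / δ with hrdef
  set k : ℝ := Real.sqrt (1 - r) with hkdef
  set m : ℝ := Real.sqrt (1 + r) with hmdef
  have hk2 : k ^ 2 = 1 - r := Real.sq_sqrt (by linarith)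
  have hm2 : m ^ 2 = 1 + r := Real.sq_sqrt (by linarith)
  have hkpos : 0 < k := Real.sqrt_pos.mpr (by linarith)
  have hmpos : 0 < m := Real.sqrt_pos.mpr (by linarith)
  set B : ℝ × ℝ →L[ℝ] ℝ × ℝ := LinearMap.toContinuousLinearMap
    (Matrix.toLin (Module.Basis.finTwoProd ℝ) (Module.Basis.finTwoProd ℝ) !![-k, k; k, k]) with hB
  have hBapp : ∀ p : ℝ × ℝ, B p = (-k * p.1 + k * p.2, k * p.1 + k * p.2) := by
    intro p
    rw [hB]
    simp [Matrix.toLin_finTwoProd_apply]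
  have hdet : B.det = -(2 * k ^ 2) := by
    rw [hB]
    rw [ContinuousLinearMap.det, LinearMap.coe_toContinuousLinearMap, LinearMap.det_toLin,
      Matrix.det_fin_two_of]
    ring
  have hinj : Set.InjOn (⇑B) S := by
    intro p _ q _ h
    rw [hBapp, hBapp] at h
    have h1 : -k * p.1 + k * p.2 = -k * q.1 + k * q.2 := congrArg Prod.fst h
    have h2 : k * p.1 + k * p.2 = k * q.1 + k * q.2 := congrArg Prod.snd h
    have e2 : k * (2 * p.2) = k * (2 * q.2) := by ring_nf; ring_nf at h1 h2; linarith
    have e1 : k * (2 * p.1) = k * (2 * q.1) := by ring_nf; ring_nf at h1 h2; linarith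
    have f2 := mul_left_cancel₀ hkpos.ne' e2
    have f1 := mul_left_cancel₀ hkpos.ne' e1
    exact Prod.ext (by linarith) (by linarith)
  have himage : (⇑B) '' S = {q : ℝ × ℝ | q.1 * q.2 < 0} := by
    ext q
    constructor
    · rintro ⟨p, hp, rfl⟩
      rw [hBapp]
      have hp' : p.2 ^ 2 < p.1 ^ 2 := hp
      have hkk : 0 < k * k := mul_pos hkpos hkpos
      show (-k * p.1 + k * p.2) * (k * p.1 + k * p.2) < 0
      nlinarith [mul_pos hkk (sub_pos.mpr hp')]
    · intro hq
      refine ⟨((q.2 - q.1) / (2 * k), (q.2 + q.1) / (2 * k)), ?_, ?_⟩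
      · show ((q.2 + q.1) / (2 * k)) ^ 2 < ((q.2 - q.1) / (2 * k)) ^ 2
        have hq' : q.1 * q.2 < 0 := hq
        rw [div_pow, div_pow, div_lt_div_iff₀ (by positivity) (by positivity)]
        nlinarith [sq_nonneg (2 * k)]
      · rw [hBapp]
        have hq' : q.1 * q.2 < 0 := hq
        refine Prod.ext ?_ ?_ <;> (show _ = _) <;> field_simp <;> ring
  calc (∫ p : ℝ × ℝ in {q : ℝ × ℝ | q.1 * q.2 < 0},
        (2 * π * Real.sqrt (1 - r ^ 2))⁻¹ *
          Real.exp (-(((p.1 - u) ^ 2 + (p.2 - u) ^ 2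
            - 2 * r * (p.1 - u) * (p.2 - u)) / (2 * (1 - r ^ 2)))))
      = ∫ p : ℝ × ℝ in (⇑B) '' S,
        (2 * π * Real.sqrt (1 - r ^ 2))⁻¹ *
          Real.exp (-(((p.1 - u) ^ 2 + (p.2 - u) ^ 2
            - 2 * r * (p.1 - u) * (p.2 - u)) / (2 * (1 - r ^ 2)))) := by rw [himage]
    _ = ∫ p : ℝ × ℝ in S, |B.det| • ((2 * π * Real.sqrt (1 - r ^ 2))⁻¹ *
          Real.exp (-((((B p).1 - u) ^ 2 + ((B p).2 - u) ^ 2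
            - 2 * r * ((B p).1 - u) * ((B p).2 - u)) / (2 * (1 - r ^ 2))))) :=
      integral_image_eq_integral_abs_det_fderiv_smul volume measurableSet_S
        (fun x _ => (B.hasFDerivAt).hasFDerivWithinAt) hinj _
    _ = ∫ p : ℝ × ℝ in S, (k / (π * m)) *
          Real.exp (-((k * p.2 - u) ^ 2 / (1 + r) + p.1 ^ 2)) := by
      refine setIntegral_congr_fun measurableSet_S (fun p _ => ?_)
      rw [hdet, hBapp, smul_eq_mul]
      have hsq : Real.sqrt (1 - r ^ 2) = k * m := by
        rw [show 1 - r ^ 2 = (1 - r) * (1 + r) by ring, Real.sqrt_mul (by linarith)]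
      have habs : |(-(2 * k ^ 2))| = 2 * k ^ 2 := by
        rw [abs_neg, abs_of_nonneg (by positivity)]
      rw [hsq, habs]
      have hconst : 2 * k ^ 2 * (2 * π * (k * m))⁻¹ = k / (π * m) := by
        have hπ : (0:ℝ) < π := Real.pi_pos
        field_simp
      have hexp : (-(((-k * p.1 + k * p.2 - u) ^ 2 + (k * p.1 + k * p.2 - u) ^ 2
          - 2 * r * (-k * p.1 + k * p.2 - u) * (k * p.1 + k * p.2 - u)) / (2 * (1 - r ^ 2))))
          = -((k * p.2 - u) ^ 2 / (1 + r) + p.1 ^ 2) := by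
        have hrk : r = 1 - k ^ 2 := by linarith
        rw [hrk]
        have d1 : (2:ℝ) * (1 - (1 - k ^ 2) ^ 2) ≠ 0 := by nlinarith
        have d2 : (1:ℝ) + (1 - k ^ 2) ≠ 0 := by nlinarith
        have d3 : (1:ℝ) - (1 - k ^ 2) ^ 2 ≠ 0 := by nlinarith
        field_simp
        ring
      rw [hexp, ← hconst]
      ring
    _ = (k / (π * m)) * ∫ p : ℝ × ℝ in S,
          Real.exp (-((k * p.2 - u) ^ 2 / (1 + r) + p.1 ^ 2)) := integral_const_mul _ _

lemma tendsto_G (u : ℝ) :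
    Tendsto (fun δ : ℝ => ∫ p : ℝ × ℝ in S,
        Real.exp (-((Real.sqrt (1 - Real.sin δ / δ) * p.2 - u) ^ 2 / (1 + Real.sin δ / δ)
          + p.1 ^ 2)))
      (nhdsWithin 0 (Set.Ioi 0)) (nhds (2 * Real.exp (-u ^ 2 / 2))) := by
  have lim_eq : ∫ p : ℝ × ℝ in S, Real.exp (-(u ^ 2 / 2 + p.1 ^ 2))
      = 2 * Real.exp (-u ^ 2 / 2) := by
    have e1 : ∀ p : ℝ × ℝ, Real.exp (-(u ^ 2 / 2 + p.1 ^ 2))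
        = Real.exp (-u ^ 2 / 2) * Real.exp (-p.1 ^ 2) := by
      intro p
      rw [← Real.exp_add]
      ring_nf
    simp_rw [e1]
    rw [integral_const_mul, integral_J]
    ring
  rw [← lim_eq]
  refine tendsto_integral_filter_of_dominated_convergence
    (bound := fun p : ℝ × ℝ => Real.exp (-(1/2) * p.1^2) * Real.exp (-(1/2) * p.2^2))
    ?_ ?_ ?_ ?_
  · refine Eventually.of_forall (fun δ => ?_)
    have hc : Continuous (fun p : ℝ × ℝ =>
        Real.exp (-((Real.sqrt (1 - Real.sin δ / δ) * p.2 - u) ^ 2 / (1 + Real.sin δ / δ)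
          + p.1 ^ 2))) := by fun_prop
    exact hc.aestronglyMeasurable.restrict
  · filter_upwards [Ioo_mem_nhdsGT_of_mem (by norm_num : (0:ℝ) ∈ Set.Ico (0:ℝ) 1)] with δ hδ
    rw [ae_restrict_iff' measurableSet_S]
    refine ae_of_all _ (fun p hp => ?_)
    have hp' : p.2 ^ 2 < p.1 ^ 2 := hp
    have hr0 : 0 < Real.sin δ / δ := sinc_pos hδ
    rw [Real.norm_eq_abs, abs_of_pos (Real.exp_pos _), ← Real.exp_add]
    apply Real.exp_le_exp.mpr
    have h1 : 0 ≤ (Real.sqrt (1 - Real.sin δ / δ) * p.2 - u) ^ 2 / (1 + Real.sin δ / δ) :=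
      div_nonneg (sq_nonneg _) (by linarith)
    nlinarith
  · exact integrable_bound.restrict
  · refine ae_of_all _ (fun p => ?_)
    have hk0 : Tendsto (fun δ : ℝ => Real.sqrt (1 - Real.sin δ / δ))
        (nhdsWithin 0 (Set.Ioi 0)) (nhds 0) := by
      have h1 : Tendsto (fun δ : ℝ => 1 - Real.sin δ / δ)
          (nhdsWithin 0 (Set.Ioi 0)) (nhds 0) := by
        have := (tendsto_const_nhds (x := (1:ℝ))
          (f := nhdsWithin (0:ℝ) (Set.Ioi 0))).sub tendsto_sinc
        norm_num at this
        exact this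
      have := (Real.continuous_sqrt.tendsto 0).comp h1
      rwa [Real.sqrt_zero] at this
    have t1 : Tendsto (fun δ : ℝ => (Real.sqrt (1 - Real.sin δ / δ) * p.2 - u) ^ 2)
        (nhdsWithin 0 (Set.Ioi 0)) (nhds ((0 * p.2 - u) ^ 2)) :=
      ((hk0.mul_const p.2).sub_const u).pow 2
    have t2 : Tendsto (fun δ : ℝ => 1 + Real.sin δ / δ) (nhdsWithin 0 (Set.Ioi 0)) (nhds 2) := by
      have := (tendsto_const_nhds (x := (1:ℝ))
        (f := nhdsWithin (0:ℝ) (Set.Ioi 0))).add tendsto_sinc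
      norm_num at this
      exact this
    have t3 := (t1.div t2 (by norm_num)).add_const (p.1 ^ 2)
    have t4 := (Real.continuous_exp.tendsto _).comp t3.neg
    have : -((0 * p.2 - u) ^ 2 / 2 + p.1 ^ 2) = -(u ^ 2 / 2 + p.1 ^ 2) := by ring
    rwa [this] at t4

end

end GaussSignAux

open GaussSignAux in
/-- For the stationary Gaussian process with mean `u`, unit variance and covariance
`sin(t-s)/(t-s)`, the pair `(Z(0), Z(δ))` is bivariate normal with mean `(u,u)`,
unit variances and correlation `sin δ / δ`; we express the sign-change probability
`P(Z(0) Z(δ) < 0)` via the corresponding bivariate Gaussian density. -/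
theorem gaussian_sign_change_probability_asymptotics (u : ℝ) :
    Tendsto (fun δ : ℝ =>
      (∫ p : ℝ × ℝ in {q : ℝ × ℝ | q.1 * q.2 < 0},
          (2 * π * Real.sqrt (1 - (Real.sin δ / δ) ^ 2))⁻¹ *
            Real.exp (-(((p.1 - u) ^ 2 + (p.2 - u) ^ 2
              - 2 * (Real.sin δ / δ) * (p.1 - u) * (p.2 - u))
              / (2 * (1 - (Real.sin δ / δ) ^ 2))))) / δ)
      (nhdsWithin 0 (Set.Ioi 0))
      (nhds (Real.exp (-u ^ 2 / 2) / (π * Real.sqrt 3))) := by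
  have hπ : (0:ℝ) < π := Real.pi_pos
  have key : Tendsto (fun δ : ℝ =>
      ((Real.sqrt (1 - Real.sin δ / δ) / δ) * (π * Real.sqrt (1 + Real.sin δ / δ))⁻¹) *
        ∫ p : ℝ × ℝ in S,
          Real.exp (-((Real.sqrt (1 - Real.sin δ / δ) * p.2 - u) ^ 2 / (1 + Real.sin δ / δ)
            + p.1 ^ 2)))
      (nhdsWithin 0 (Set.Ioi 0))
      (nhds (((Real.sqrt 6)⁻¹ * (π * Real.sqrt 2)⁻¹) * (2 * Real.exp (-u ^ 2 / 2)))) := by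
    refine Tendsto.mul (Tendsto.mul tendsto_k_div ?_) (tendsto_G u)
    exact (tendsto_const_nhds.mul tendsto_m).inv₀ (by positivity)
  have hval : ((Real.sqrt 6)⁻¹ * (π * Real.sqrt 2)⁻¹) * (2 * Real.exp (-u ^ 2 / 2))
      = Real.exp (-u ^ 2 / 2) / (π * Real.sqrt 3) := by
    have h62 : Real.sqrt 6 * Real.sqrt 2 = 2 * Real.sqrt 3 := by
      rw [← Real.sqrt_mul (by norm_num : (0:ℝ) ≤ 6) 2,
        show (6:ℝ) * 2 = 2 ^ 2 * 3 by norm_num,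
        Real.sqrt_mul (by positivity) 3, Real.sqrt_sq (by norm_num : (0:ℝ) ≤ 2)]
    have h6 : (0:ℝ) < Real.sqrt 6 := by positivity
    have h2 : (0:ℝ) < Real.sqrt 2 := by positivity
    have h3 : (0:ℝ) < Real.sqrt 3 := by positivity
    field_simp
    linear_combination -h62
  rw [hval] at key
  refine key.congr' ?_
  filter_upwards [Ioo_mem_nhdsGT_of_mem (by norm_num : (0:ℝ) ∈ Set.Ico (0:ℝ) 1)] with δ hδ
  rw [cov u (sinc_pos hδ) (sinc_lt_one hδ)]
  have hδ0 : δ ≠ 0 := ne_of_gt hδ.1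
  field_simp
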